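/- Fix M > −1/4 and w > 0, and set A = √(−1 + Mw² + √(1 + (1+2M)w² + M²w⁴))/(√2·w) and B = (2 + 2M²w⁴ + w² + 2(Mw² − 1)√(1 + (1+2M)w² + M²w⁴))/w². Define ρ₁(u) = A cos u and ρ₂(u) = (−1 + √(1 + 4M + B cos²u)·sin u)/(2√(1 + w²A² cos²u)). Then h_w(ρ₁(u), ρ₂(u)) = M for all u ∈ [0, 2π]. -/

import Mathlib

open Real

/-- The curve `(ρ₁, ρ₂)` lies on the level set `h_w⁻¹(M)`. -/
theorem heart_parametrization_on_level (M w : ℝ) (hM : -(1 / 4) < M) (hw : 0 < w)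
    (A B : ℝ)
    (hA : A = Real.sqrt (-1 + M * w ^ 2 +
        Real.sqrt (1 + (1 + 2 * M) * w ^ 2 + M ^ 2 * w ^ 4)) / (Real.sqrt 2 * w))
    (hB : B = (2 + 2 * M ^ 2 * w ^ 4 + w ^ 2 + 2 * (M * w ^ 2 - 1) *
        Real.sqrt (1 + (1 + 2 * M) * w ^ 2 + M ^ 2 * w ^ 4)) / w ^ 2)
    (ρ₁ ρ₂ : ℝ → ℝ)
    (hρ₁ : ∀ u, ρ₁ u = A * Real.cos u)
    (hρ₂ : ∀ u, ρ₂ u =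
      (-1 + Real.sqrt (1 + 4 * M + B * (Real.cos u) ^ 2) * Real.sin u) /
        (2 * Real.sqrt (1 + w ^ 2 * A ^ 2 * (Real.cos u) ^ 2))) :
    ∀ u ∈ Set.Icc (0 : ℝ) (2 * Real.pi),
      ρ₂ u / Real.sqrt (1 + w ^ 2 * (ρ₁ u) ^ 2) + (ρ₁ u) ^ 2 + (ρ₂ u) ^ 2 = M := by
  have hw2 : (0:ℝ) < w ^ 2 := by positivity
  set S := Real.sqrt (1 + (1 + 2 * M) * w ^ 2 + M ^ 2 * w ^ 4) with hSdef
  have hS2 : S ^ 2 = 1 + (1 + 2 * M) * w ^ 2 + M ^ 2 * w ^ 4 := by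
    rw [hSdef]
    exact Real.sq_sqrt (by nlinarith [sq_nonneg (1 + M * w ^ 2), sq_nonneg w])
  have hS0 : 0 ≤ S := Real.sqrt_nonneg _
  have hSge : 0 ≤ -1 + M * w ^ 2 + S := by nlinarith [hS2, hS0, hw2, hM]
  have hA2 : A ^ 2 = (-1 + M * w ^ 2 + S) / (2 * w ^ 2) := by
    rw [hA, div_pow, mul_pow, Real.sq_sqrt hSge, Real.sq_sqrt (by norm_num : (0:ℝ) ≤ 2)]
  have hx : 2 * w ^ 2 * A ^ 2 = -1 + M * w ^ 2 + S := by
    rw [hA2]; field_simp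
  have hBw : B * w ^ 2 = (M * w ^ 2 + S - 1) ^ 2 := by
    rw [hB, div_mul_cancel₀ _ (ne_of_gt hw2)]
    linear_combination -hS2
  have hB0 : 0 ≤ B := by nlinarith [sq_nonneg (M * w ^ 2 + S - 1)]
  have key1 : B = 4 * w ^ 2 * A ^ 4 := by
    refine mul_right_cancel₀ (ne_of_gt hw2) ?_
    have : (2 * w ^ 2 * A ^ 2) ^ 2 = (-1 + M * w ^ 2 + S) ^ 2 := by rw [hx]
    linear_combination hBw - this
  have key2 : B - 1 - 4 * M = 4 * A ^ 2 * (M * w ^ 2 - 1) := by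
    refine mul_right_cancel₀ (ne_of_gt hw2) ?_
    linear_combination hBw - 2 * (M * w ^ 2 - 1) * hx + hS2
  intro u _
  rw [hρ₁ u, hρ₂ u]
  set c := Real.cos u with hc
  set s := Real.sin u with hs
  have hcs : s ^ 2 + c ^ 2 = 1 := sin_sq_add_cos_sq u
  have hE0 : (0:ℝ) ≤ 1 + 4 * M + B * c ^ 2 := by nlinarith [sq_nonneg c]
  have hE2 : (Real.sqrt (1 + 4 * M + B * c ^ 2)) ^ 2 = 1 + 4 * M + B * c ^ 2 :=
    Real.sq_sqrt hE0
  set e := Real.sqrt (1 + 4 * M + B * c ^ 2) with he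
  have hD2 : (Real.sqrt (1 + w ^ 2 * A ^ 2 * c ^ 2)) ^ 2 = 1 + w ^ 2 * A ^ 2 * c ^ 2 :=
    Real.sq_sqrt (by positivity)
  have hDpos : 0 < Real.sqrt (1 + w ^ 2 * A ^ 2 * c ^ 2) :=
    Real.sqrt_pos.mpr (by positivity)
  set D := Real.sqrt (1 + w ^ 2 * A ^ 2 * c ^ 2) with hD
  have hsame : (1 : ℝ) + w ^ 2 * (A * c) ^ 2 = 1 + w ^ 2 * A ^ 2 * c ^ 2 := by ring
  rw [hsame]
  have main : 2 * (-1 + e * s) + (-1 + e * s) ^ 2 + 4 * D ^ 2 * (A * c) ^ 2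
      = 4 * M * D ^ 2 := by
    linear_combination s ^ 2 * hE2 + (4 * A ^ 2 * c ^ 2 - 4 * M) * hD2 +
      (1 + 4 * M + B * c ^ 2) * hcs + c ^ 2 * key2 - c ^ 4 * key1
  field_simp
  rw [← hD]
  linear_combination D * main
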